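/- Let β ≥ γ ≥ 0 be real numbers with β + γ > 1, and let ε > 0. Define α = γ if β > 1, α = γ − ε if β = 1, and α = β + γ − 1 if β < 1. Then there exists a constant C = C(β, γ, ε) > 0 such that for all a₁, a₂ ∈ ℝ, ∫_ℝ ⟨x − a₁⟩^{−β} ⟨x − a₂⟩^{−γ} dx ≤ C ⟨a₁ − a₂⟩^{−α}. -/

import Mathlib

open MeasureTheory Real

open Set

/-- The Japanese bracket `⟨x⟩ = (1 + x²)^{1/2}`. -/
noncomputable def jpn (x : ℝ) : ℝ := Real.sqrt (1 + x ^ 2)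

lemma jpn_pos (x : ℝ) : 0 < jpn x := Real.sqrt_pos.2 (by positivity)

lemma one_le_jpn (x : ℝ) : 1 ≤ jpn x := Real.one_le_sqrt.2 (by nlinarith [sq_nonneg x])

lemma abs_le_jpn (x : ℝ) : |x| ≤ jpn x := by
  rw [← Real.sqrt_sq_eq_abs]
  exact Real.sqrt_le_sqrt (by nlinarith)

lemma jpn_mono {x y : ℝ} (h : |x| ≤ |y|) : jpn x ≤ jpn y := by
  have : x ^ 2 ≤ y ^ 2 := by
    rw [← sq_abs x, ← sq_abs y]; exact pow_le_pow_left₀ (abs_nonneg x) h 2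
  exact Real.sqrt_le_sqrt (by linarith)

lemma jpn_abs (x : ℝ) : jpn |x| = jpn x := by unfold jpn; rw [sq_abs]

lemma one_add_abs_le_two_jpn (x : ℝ) : 1 + |x| ≤ 2 * jpn x := by
  have h4 : Real.sqrt 4 = 2 := by
    rw [show (4:ℝ) = 2 ^ 2 by norm_num, Real.sqrt_sq (by norm_num)]
  have : 2 * jpn x = Real.sqrt (4 * (1 + x ^ 2)) := by
    rw [Real.sqrt_mul (by norm_num), h4]; rfl
  rw [this, ← Real.sqrt_sq (by positivity : (0:ℝ) ≤ 1 + |x|)]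
  exact Real.sqrt_le_sqrt (by nlinarith [sq_nonneg (|x| - 1), sq_abs x])

lemma jpn_half (d : ℝ) : jpn d ≤ 2 * jpn (d / 2) := by
  have h4 : Real.sqrt 4 = 2 := by
    rw [show (4:ℝ) = 2 ^ 2 by norm_num, Real.sqrt_sq (by norm_num)]
  have : 2 * jpn (d / 2) = Real.sqrt (4 * (1 + (d / 2) ^ 2)) := by
    rw [Real.sqrt_mul (by norm_num), h4]; rfl
  rw [this]
  exact Real.sqrt_le_sqrt (by nlinarith)

lemma jpn_triple {u v : ℝ} (h : |u| ≤ 3 * |v|) : jpn u ≤ 3 * jpn v := by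
  have h9 : Real.sqrt 9 = 3 := by
    rw [show (9:ℝ) = 3 ^ 2 by norm_num, Real.sqrt_sq (by norm_num)]
  have : 3 * jpn v = Real.sqrt (9 * (1 + v ^ 2)) := by
    rw [Real.sqrt_mul (by norm_num), h9]; rfl
  rw [this]
  exact Real.sqrt_le_sqrt (by nlinarith [sq_abs u, sq_abs v, abs_nonneg u, abs_nonneg v])

lemma rpow_anti {a b r : ℝ} (ha : 0 < a) (hab : a ≤ b) (hr : 0 ≤ r) : b ^ (-r) ≤ a ^ (-r) := by
  rw [Real.rpow_neg ha.le, Real.rpow_neg (ha.trans_le hab).le]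
  exact inv_anti₀ (Real.rpow_pos_of_pos ha r) (Real.rpow_le_rpow ha.le hab hr)

lemma rpow_neg_div {a b : ℝ} (ha : 0 < a) (hb : 0 < b) (r : ℝ) :
    (a / b) ^ (-r) = b ^ r * a ^ (-r) := by
  rw [Real.div_rpow ha.le hb.le, Real.rpow_neg ha.le, Real.rpow_neg hb.le]
  field_simp

lemma continuous_jpn : Continuous jpn := by
  unfold jpn; exact (continuous_const.add (continuous_pow 2)).sqrt

lemma continuous_jpn_rpow (r : ℝ) : Continuous fun x => jpn x ^ r :=
  continuous_jpn.rpow_const fun x => Or.inl (jpn_pos x).ne'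

lemma jpn_rpow_nonneg (x r : ℝ) : 0 ≤ jpn x ^ r := Real.rpow_nonneg (jpn_pos x).le r

lemma integrable_jpn_rpow {ρ : ℝ} (h : 1 < ρ) : Integrable (fun y : ℝ => jpn y ^ (-ρ)) := by
  have h1 : ((Module.finrank ℝ ℝ : ℕ) : ℝ) < ρ := by simp [h]
  have := integrable_rpow_neg_one_add_norm_sq (E := ℝ) (μ := volume) h1
  refine this.congr ?_
  refine Filter.Eventually.of_forall fun x => ?_
  show (1 + ‖x‖ ^ 2) ^ (-ρ / 2) = jpn x ^ (-ρ)
  rw [Real.norm_eq_abs, sq_abs]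
  unfold jpn
  rw [Real.sqrt_eq_rpow, ← Real.rpow_mul (by positivity)]
  congr 1
  ring

lemma setIntegral_shift (s : Set ℝ) (hs : MeasurableSet s) (g : ℝ → ℝ) (a : ℝ) :
    ∫ x in {x : ℝ | x - a ∈ s}, g (x - a) = ∫ y in s, g y := by
  have hs' : MeasurableSet {x : ℝ | x - a ∈ s} := (measurable_sub_const a) hs
  rw [← integral_indicator hs', ← integral_indicator hs,
    ← integral_sub_right_eq_self (s.indicator g) a]
  congr 1

lemma window_raw {τ : ℝ} (h0 : 0 ≤ τ) (h1 : τ < 1) {R : ℝ} (hR : 0 ≤ R) :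
    ∫ y in Icc (-R) R, jpn y ^ (-τ) ≤ 2 * 2 ^ τ / (1 - τ) * (1 + R) ^ (1 - τ) := by
  have h1' : (0:ℝ) < 1 - τ := by linarith
  -- step 1: reduce to Ioc 0 R via evenness
  have heq : ∫ y in Icc (-R) R, jpn y ^ (-τ) = 2 * ∫ y in Ioc 0 R, jpn y ^ (-τ) := by
    have e1 : ∀ y : ℝ, (Icc (-R) R).indicator (fun t => jpn t ^ (-τ)) y
        = (Iic R).indicator (fun t => jpn t ^ (-τ)) |y| := by
      intro y
      by_cases h : |y| ≤ R
      · rw [Set.indicator_of_mem (by rw [mem_Icc]; constructor <;> [linarith [neg_abs_le y]; linarith [le_abs_self y]]),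
          Set.indicator_of_mem (by exact h), jpn_abs]
      · rw [Set.indicator_of_notMem, Set.indicator_of_notMem (by exact h)]
        rw [mem_Icc]
        intro ⟨h1, h2⟩
        exact h (abs_le.2 ⟨by linarith, h2⟩)
    rw [← integral_indicator measurableSet_Icc]
    calc ∫ y : ℝ, (Icc (-R) R).indicator (fun t => jpn t ^ (-τ)) y
        = ∫ y : ℝ, (Iic R).indicator (fun t => jpn t ^ (-τ)) |y| := by
          congr 1; ext y; exact e1 y
      _ = 2 * ∫ y in Ioi 0, (Iic R).indicator (fun t => jpn t ^ (-τ)) y := integral_comp_abs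
      _ = 2 * ∫ y in Ioc 0 R, jpn y ^ (-τ) := by
          rw [integral_indicator measurableSet_Iic, Measure.restrict_restrict measurableSet_Iic,
            show Iic R ∩ Ioi (0:ℝ) = Ioc 0 R from by ext y; simp [mem_Ioc, mem_Iic, mem_Ioi, and_comm]]
  rw [heq]
  -- step 2: pointwise bound on Ioc 0 R
  have hmono : ∫ y in Ioc 0 R, jpn y ^ (-τ) ≤ ∫ y in Ioc 0 R, 2 ^ τ * (1 + y) ^ (-τ) := by
    refine setIntegral_mono_on ?_ ?_ measurableSet_Ioc ?_
    · exact ((continuous_jpn_rpow (-τ)).integrableOn_Icc (a := 0) (b := R)).mono_set Ioc_subset_Icc_self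
    · refine (ContinuousOn.integrableOn_compact isCompact_Icc ?_).mono_set (Ioc_subset_Icc_self (a := 0) (b := R))
      refine ContinuousOn.mul continuousOn_const ?_
      refine ContinuousOn.rpow_const (continuousOn_const.add continuousOn_id) ?_
      intro y hy
      have : (0:ℝ) < 1 + y := by have := hy.1; simp at this ⊢; linarith
      exact Or.inl this.ne'
    · intro y hy
      have hy0 : 0 < y := hy.1
      have hpos : (0:ℝ) < (1 + y) / 2 := by linarith
      have hle : (1 + y) / 2 ≤ jpn y := by
        have := one_add_abs_le_two_jpn y
        rw [abs_of_pos hy0] at this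
        linarith
      calc jpn y ^ (-τ) ≤ ((1 + y) / 2) ^ (-τ) := rpow_anti hpos hle h0
        _ = 2 ^ τ * (1 + y) ^ (-τ) := rpow_neg_div (by linarith) (by norm_num) τ
  -- step 3: FTC
  have hval : ∫ y in Ioc 0 R, (1 + y) ^ (-τ) = ((1 + R) ^ (1 - τ) - 1) / (1 - τ) := by
    rw [← intervalIntegral.integral_of_le hR]
    have := intervalIntegral.integral_comp_add_left (a := 0) (b := R) (fun x : ℝ => x ^ (-τ)) 1
    rw [this, add_zero]
    rw [integral_rpow (Or.inl (by linarith)), Real.one_rpow, show -τ + 1 = 1 - τ by ring]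
  have hIoc : ∫ y in Ioc 0 R, 2 ^ τ * (1 + y) ^ (-τ) = 2 ^ τ * (((1 + R) ^ (1 - τ) - 1) / (1 - τ)) := by
    rw [integral_const_mul, hval]
  have hfin : 2 ^ τ * (((1 + R) ^ (1 - τ) - 1) / (1 - τ)) ≤ 2 ^ τ * ((1 + R) ^ (1 - τ) / (1 - τ)) := by
    have h2 : (0:ℝ) < 2 ^ τ := Real.rpow_pos_of_pos (by norm_num) τ
    have : ((1 + R) ^ (1 - τ) - 1) / (1 - τ) ≤ (1 + R) ^ (1 - τ) / (1 - τ) := by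
      rw [div_le_div_iff₀ h1' h1']
      nlinarith [h1']
    nlinarith [Real.rpow_nonneg (by linarith : (0:ℝ) ≤ 1 + R) (1 - τ)]
  calc 2 * ∫ y in Ioc 0 R, jpn y ^ (-τ) ≤ 2 * (2 ^ τ * (((1 + R) ^ (1 - τ) - 1) / (1 - τ))) := by
        rw [← hIoc]; linarith [hmono]
    _ ≤ 2 * (2 ^ τ * ((1 + R) ^ (1 - τ) / (1 - τ))) := by linarith [hfin]
    _ = 2 * 2 ^ τ / (1 - τ) * (1 + R) ^ (1 - τ) := by ring

lemma tail_raw {ρ : ℝ} (hρ : 1 < ρ) {S : ℝ} (hS : 0 < S) :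
    ∫ y in {y : ℝ | S ≤ |y|}, jpn y ^ (-ρ) ≤ 2 / (ρ - 1) * S ^ (1 - ρ) := by
  have hmeas : MeasurableSet {y : ℝ | S ≤ |y|} :=
    (isClosed_le continuous_const continuous_abs).measurableSet
  have heq : ∫ y in {y : ℝ | S ≤ |y|}, jpn y ^ (-ρ) = 2 * ∫ y in Ici S, jpn y ^ (-ρ) := by
    have e1 : ∀ y : ℝ, ({y : ℝ | S ≤ |y|}).indicator (fun t => jpn t ^ (-ρ)) y
        = (Ici S).indicator (fun t => jpn t ^ (-ρ)) |y| := by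
      intro y
      by_cases h : S ≤ |y|
      · rw [Set.indicator_of_mem (by exact h), Set.indicator_of_mem (by exact h), jpn_abs]
      · rw [Set.indicator_of_notMem (by exact h), Set.indicator_of_notMem (by exact h)]
    rw [← integral_indicator hmeas]
    calc ∫ y : ℝ, ({y : ℝ | S ≤ |y|}).indicator (fun t => jpn t ^ (-ρ)) y
        = ∫ y : ℝ, (Ici S).indicator (fun t => jpn t ^ (-ρ)) |y| := by congr 1; ext y; exact e1 y
      _ = 2 * ∫ y in Ioi 0, (Ici S).indicator (fun t => jpn t ^ (-ρ)) y := integral_comp_abs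
      _ = 2 * ∫ y in Ici S, jpn y ^ (-ρ) := by
          rw [integral_indicator measurableSet_Ici, Measure.restrict_restrict measurableSet_Ici,
            show Ici S ∩ Ioi (0:ℝ) = Ici S from inter_eq_left.2 fun y hy => lt_of_lt_of_le hS hy]
  rw [heq]
  have hmono : ∫ y in Ici S, jpn y ^ (-ρ) ≤ ∫ y in Ici S, y ^ (-ρ) := by
    refine setIntegral_mono_on ((integrable_jpn_rpow hρ).integrableOn) ?_ measurableSet_Ici ?_
    · exact (integrableOn_Ici_iff_integrableOn_Ioi (by simp)).2 (integrableOn_Ioi_rpow_of_lt (by linarith) hS)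
    · intro y hy
      have hy0 : 0 < y := lt_of_lt_of_le hS hy
      exact rpow_anti hy0 (le_trans (le_abs_self y) (abs_le_jpn y)) (by linarith)
  have hval : ∫ y in Ici S, y ^ (-ρ) = S ^ (1 - ρ) / (ρ - 1) := by
    rw [integral_Ici_eq_integral_Ioi, integral_Ioi_rpow_of_lt (by linarith) hS]
    rw [show -ρ + 1 = 1 - ρ by ring, show (1:ℝ) - ρ = -(ρ - 1) by ring, div_neg, neg_div, neg_neg]
  calc 2 * ∫ y in Ici S, jpn y ^ (-ρ) ≤ 2 * (S ^ (1 - ρ) / (ρ - 1)) := by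
        rw [← hval]; linarith [hmono]
    _ = 2 / (ρ - 1) * S ^ (1 - ρ) := by ring

lemma W_pull {τ s s' : ℝ} (hτ : 0 ≤ τ) (hs' : 0 ≤ s') (hss : s' ≤ s) (h1 : 1 < τ + s')
    (d : ℝ) (hd : 1 ≤ |d|) :
    ∫ y in Icc (-(|d| / 2)) (|d| / 2), jpn y ^ (-τ)
      ≤ (∫ y : ℝ, jpn y ^ (-(τ + s'))) * jpn d ^ s := by
  have hR : (0:ℝ) ≤ |d| / 2 := by positivity
  have step1 : ∫ y in Icc (-(|d| / 2)) (|d| / 2), jpn y ^ (-τ)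
      ≤ ∫ y in Icc (-(|d| / 2)) (|d| / 2), jpn y ^ (-(τ + s')) * jpn d ^ s := by
    refine setIntegral_mono_on
      ((continuous_jpn_rpow (-τ)).integrableOn_Icc)
      (((integrable_jpn_rpow h1).mul_const _).integrableOn)
      measurableSet_Icc ?_
    intro y hy
    have hyd : jpn y ≤ jpn d := by
      refine jpn_mono ?_
      have h1 := hy.1; have h2 := hy.2
      have : |y| ≤ |d| / 2 := abs_le.2 ⟨by linarith, h2⟩
      linarith [abs_nonneg d, this]
    calc jpn y ^ (-τ) = jpn y ^ (-(τ + s')) * jpn y ^ s' := by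
          rw [← Real.rpow_add (jpn_pos y)]; congr 1; ring
      _ ≤ jpn y ^ (-(τ + s')) * jpn d ^ s := by
          refine mul_le_mul_of_nonneg_left ?_ (jpn_rpow_nonneg y _)
          calc jpn y ^ s' ≤ jpn d ^ s' := Real.rpow_le_rpow (jpn_pos y).le hyd hs'
            _ ≤ jpn d ^ s := Real.rpow_le_rpow_of_exponent_le (one_le_jpn d) hss
  have step2 : ∫ y in Icc (-(|d| / 2)) (|d| / 2), jpn y ^ (-(τ + s')) * jpn d ^ s
      ≤ (∫ y : ℝ, jpn y ^ (-(τ + s'))) * jpn d ^ s := by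
    rw [integral_mul_const]
    exact mul_le_mul_of_nonneg_right
      (setIntegral_le_integral (integrable_jpn_rpow h1)
        (Filter.Eventually.of_forall fun y => jpn_rpow_nonneg y _))
      (jpn_rpow_nonneg d s)
  exact step1.trans step2

lemma W_ftc {τ : ℝ} (h0 : 0 ≤ τ) (h1 : τ < 1) (d : ℝ) (hd : 1 ≤ |d|) :
    ∫ y in Icc (-(|d| / 2)) (|d| / 2), jpn y ^ (-τ)
      ≤ (2 * 2 ^ τ / (1 - τ) * (3 / 2) ^ (1 - τ)) * jpn d ^ (1 - τ) := by
  have h1' : (0:ℝ) < 1 - τ := by linarith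
  have hR : (0:ℝ) ≤ |d| / 2 := by positivity
  refine (window_raw h0 h1 hR).trans ?_
  have hbd : 1 + |d| / 2 ≤ 3 / 2 * jpn d := by
    have h2 : |d| ≤ jpn d := abs_le_jpn d
    have h3 : 1 ≤ jpn d := one_le_jpn d
    linarith [hd]
  have : (1 + |d| / 2) ^ (1 - τ) ≤ (3 / 2 * jpn d) ^ (1 - τ) :=
    Real.rpow_le_rpow (by positivity) hbd h1'.le
  rw [Real.mul_rpow (by norm_num) (jpn_pos d).le] at this
  calc 2 * 2 ^ τ / (1 - τ) * (1 + |d| / 2) ^ (1 - τ)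
      ≤ 2 * 2 ^ τ / (1 - τ) * ((3 / 2) ^ (1 - τ) * jpn d ^ (1 - τ)) := by
        refine mul_le_mul_of_nonneg_left this (by positivity)
    _ = (2 * 2 ^ τ / (1 - τ) * (3 / 2) ^ (1 - τ)) * jpn d ^ (1 - τ) := by ring

lemma f_le_g {β γ : ℝ} (hβ : 0 ≤ β) (hγ : 0 ≤ γ) (a₁ a₂ x : ℝ) :
    jpn (x - a₁) ^ (-β) * jpn (x - a₂) ^ (-γ)
      ≤ jpn (x - a₁) ^ (-(β + γ)) + jpn (x - a₂) ^ (-(β + γ)) := by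
  rcases le_total (jpn (x - a₁)) (jpn (x - a₂)) with h | h
  · calc jpn (x - a₁) ^ (-β) * jpn (x - a₂) ^ (-γ)
        ≤ jpn (x - a₁) ^ (-β) * jpn (x - a₁) ^ (-γ) :=
          mul_le_mul_of_nonneg_left (rpow_anti (jpn_pos _) h hγ) (jpn_rpow_nonneg _ _)
      _ = jpn (x - a₁) ^ (-(β + γ)) := by rw [← Real.rpow_add (jpn_pos _)]; congr 1; ring
      _ ≤ _ := le_add_of_nonneg_right (jpn_rpow_nonneg _ _)
  · calc jpn (x - a₁) ^ (-β) * jpn (x - a₂) ^ (-γ)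
        ≤ jpn (x - a₂) ^ (-β) * jpn (x - a₂) ^ (-γ) :=
          mul_le_mul_of_nonneg_right (rpow_anti (jpn_pos _) h hβ) (jpn_rpow_nonneg _ _)
      _ = jpn (x - a₂) ^ (-(β + γ)) := by rw [← Real.rpow_add (jpn_pos _)]; congr 1; ring
      _ ≤ _ := le_add_of_nonneg_left (jpn_rpow_nonneg _ _)

lemma continuous_f (β γ : ℝ) (a₁ a₂ : ℝ) :
    Continuous fun x : ℝ => jpn (x - a₁) ^ (-β) * jpn (x - a₂) ^ (-γ) :=
  (((continuous_jpn_rpow (-β)).comp (continuous_id.sub continuous_const)).mul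
    ((continuous_jpn_rpow (-γ)).comp (continuous_id.sub continuous_const)))

lemma integrable_f {β γ : ℝ} (hβ : 0 ≤ β) (hγ : 0 ≤ γ) (hsum : 1 < β + γ) (a₁ a₂ : ℝ) :
    Integrable (fun x : ℝ => jpn (x - a₁) ^ (-β) * jpn (x - a₂) ^ (-γ)) := by
  have hg : Integrable (fun x : ℝ =>
      jpn (x - a₁) ^ (-(β + γ)) + jpn (x - a₂) ^ (-(β + γ))) :=
    ((integrable_jpn_rpow hsum).comp_sub_right a₁).add
      ((integrable_jpn_rpow hsum).comp_sub_right a₂)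
  refine hg.mono' (continuous_f β γ a₁ a₂).aestronglyMeasurable
    (Filter.Eventually.of_forall fun x => ?_)
  rw [Real.norm_eq_abs, abs_of_nonneg (mul_nonneg (jpn_rpow_nonneg _ _) (jpn_rpow_nonneg _ _))]
  exact f_le_g hβ hγ a₁ a₂ x

set_option maxHeartbeats 2000000 in
lemma main_core (β γ α : ℝ) (hγ : 0 ≤ γ) (hβγ : γ ≤ β) (hsum : 1 < β + γ)
    (hα : α ≤ β + γ - 1) (K : ℝ) (hK : 0 < K)
    (hWβ : ∀ d : ℝ, 1 ≤ |d| →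
      ∫ y in Icc (-(|d| / 2)) (|d| / 2), jpn y ^ (-β) ≤ K * jpn d ^ (γ - α))
    (hWγ : ∀ d : ℝ, 1 ≤ |d| →
      ∫ y in Icc (-(|d| / 2)) (|d| / 2), jpn y ^ (-γ) ≤ K * jpn d ^ (β - α)) :
    ∃ C : ℝ, 0 < C ∧ ∀ a₁ a₂ : ℝ,
      (∫ x : ℝ, jpn (x - a₁) ^ (-β) * jpn (x - a₂) ^ (-γ)) ≤ C * jpn (a₁ - a₂) ^ (-α) := by
  have hβ0 : 0 ≤ β := hγ.trans hβγ
  have hρ1 : 1 < β + γ := hsum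
  set I₀ : ℝ := ∫ y : ℝ, jpn y ^ (-(β + γ)) with hI₀
  have hI₀0 : 0 ≤ I₀ := integral_nonneg fun y => jpn_rpow_nonneg y _
  have hsqrt2 : (1:ℝ) ≤ Real.sqrt 2 := Real.one_le_sqrt.2 (by norm_num)
  have hsqrt2pos : (0:ℝ) < Real.sqrt 2 := by linarith
  set CE : ℝ := 3 ^ β * (2 / (β + γ - 1) * (2 * Real.sqrt 2) ^ (β + γ - 1)) with hCE
  set Csm : ℝ := 2 * I₀ * Real.sqrt 2 ^ |α| + 1 with hCsm
  have h3β : (0:ℝ) < 3 ^ β := Real.rpow_pos_of_pos (by norm_num) β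
  have h2γ : (0:ℝ) < 2 ^ γ := Real.rpow_pos_of_pos (by norm_num) γ
  have h2β : (0:ℝ) < 2 ^ β := Real.rpow_pos_of_pos (by norm_num) β
  have hsq : (0:ℝ) ≤ Real.sqrt 2 ^ |α| := Real.rpow_nonneg hsqrt2pos.le _
  have hCsm0 : 0 < Csm := by
    have : (0:ℝ) ≤ 2 * I₀ * Real.sqrt 2 ^ |α| := mul_nonneg (by linarith) hsq
    rw [hCsm]; linarith
  have hCE0 : 0 < CE := by
    rw [hCE]
    exact mul_pos h3β (mul_pos (div_pos (by norm_num) (by linarith))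
      (Real.rpow_pos_of_pos (by linarith) _))
  refine ⟨Csm + 2 ^ γ * K + 2 ^ β * K + CE, by nlinarith, fun a₁ a₂ => ?_⟩
  set d : ℝ := a₁ - a₂ with hdd
  set D : ℝ := jpn d with hD
  have hD1 : 1 ≤ D := one_le_jpn d
  have hDpos : 0 < D := jpn_pos d
  have hDα : 0 < D ^ (-α) := Real.rpow_pos_of_pos hDpos _
  have hfint := integrable_f hβ0 hγ hsum a₁ a₂
  have hfnn : ∀ x : ℝ, 0 ≤ jpn (x - a₁) ^ (-β) * jpn (x - a₂) ^ (-γ) :=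
    fun x => mul_nonneg (jpn_rpow_nonneg _ _) (jpn_rpow_nonneg _ _)
  rcases le_or_gt (|d|) 1 with hd | hd
  · -- small |d|
    have hDle : D ≤ Real.sqrt 2 := by
      have h2 : jpn d ≤ jpn 1 := jpn_mono (by rwa [abs_one])
      have h1 : jpn 1 = Real.sqrt 2 := by unfold jpn; norm_num
      rw [hD]; rw [h1] at h2; exact h2
    have hbound : (∫ x : ℝ, jpn (x - a₁) ^ (-β) * jpn (x - a₂) ^ (-γ)) ≤ 2 * I₀ := by
      have hgsum : (∫ x : ℝ, (jpn (x - a₁) ^ (-(β + γ)) + jpn (x - a₂) ^ (-(β + γ)))) = 2 * I₀ := by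
        rw [integral_add ((integrable_jpn_rpow hsum).comp_sub_right a₁)
          ((integrable_jpn_rpow hsum).comp_sub_right a₂),
          integral_sub_right_eq_self (fun y => jpn y ^ (-(β + γ))) a₁,
          integral_sub_right_eq_self (fun y => jpn y ^ (-(β + γ))) a₂, ← two_mul]
      calc (∫ x : ℝ, jpn (x - a₁) ^ (-β) * jpn (x - a₂) ^ (-γ))
          ≤ ∫ x : ℝ, (jpn (x - a₁) ^ (-(β + γ)) + jpn (x - a₂) ^ (-(β + γ))) :=
            integral_mono hfint
              (((integrable_jpn_rpow hsum).comp_sub_right a₁).add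
                ((integrable_jpn_rpow hsum).comp_sub_right a₂)) (f_le_g hβ0 hγ a₁ a₂)
        _ = 2 * I₀ := hgsum
    have hDα2 : Real.sqrt 2 ^ (-|α|) ≤ D ^ (-α) := by
      rcases le_or_gt 0 α with h | h
      · rw [abs_of_nonneg h]
        exact rpow_anti hDpos hDle h
      · rw [abs_of_neg h]
        have h1 : Real.sqrt 2 ^ (-(-α)) ≤ 1 :=
          Real.rpow_le_one_of_one_le_of_nonpos hsqrt2 (by linarith)
        have h2 : (1:ℝ) ≤ D ^ (-α) := by
          calc (1:ℝ) = D ^ (0:ℝ) := (Real.rpow_zero D).symm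
            _ ≤ D ^ (-α) := Real.rpow_le_rpow_of_exponent_le hD1 (by linarith)
        linarith
    have key : 2 * I₀ ≤ Csm * D ^ (-α) := by
      have h0 : 0 ≤ 2 * I₀ * Real.sqrt 2 ^ |α| := mul_nonneg (by linarith) hsq
      have h3 : 2 * I₀ = 2 * I₀ * Real.sqrt 2 ^ |α| * Real.sqrt 2 ^ (-|α|) := by
        rw [mul_assoc (2 * I₀), ← Real.rpow_add hsqrt2pos]
        simp
      rw [h3]
      have h4 : 2 * I₀ * Real.sqrt 2 ^ |α| * Real.sqrt 2 ^ (-|α|)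
          ≤ 2 * I₀ * Real.sqrt 2 ^ |α| * D ^ (-α) := mul_le_mul_of_nonneg_left hDα2 h0
      refine h4.trans (mul_le_mul_of_nonneg_right ?_ hDα.le)
      rw [hCsm]; linarith
    calc (∫ x : ℝ, jpn (x - a₁) ^ (-β) * jpn (x - a₂) ^ (-γ)) ≤ 2 * I₀ := hbound
      _ ≤ Csm * D ^ (-α) := key
      _ ≤ (Csm + 2 ^ γ * K + 2 ^ β * K + CE) * D ^ (-α) := by
          refine mul_le_mul_of_nonneg_right ?_ hDα.le
          nlinarith
  · -- large |d|
    set R : ℝ := |d| / 2 with hR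
    have hRpos : 0 < R := by rw [hR]; linarith
    have hd1 : 1 ≤ |d| := hd.le
    have hDR : D / 2 ≤ jpn R := by
      have h1 : jpn |d| ≤ 2 * jpn (|d| / 2) := jpn_half |d|
      rw [jpn_abs] at h1
      rw [hD, hR]; linarith
    set A₁ : Set ℝ := Icc (a₁ - R) (a₁ + R) with hA₁
    set A₂ : Set ℝ := Icc (a₂ - R) (a₂ + R) with hA₂
    have hA₁m : MeasurableSet A₁ := measurableSet_Icc
    have hA₂m : MeasurableSet A₂ := measurableSet_Icc
    have hUm : MeasurableSet (A₁ ∪ A₂) := hA₁m.union hA₂m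
    set f : ℝ → ℝ := fun x => jpn (x - a₁) ^ (-β) * jpn (x - a₂) ^ (-γ) with hf
    have habs : ∀ x : ℝ, |d| ≤ |x - a₁| + |x - a₂| := by
      intro x
      have he : d = (x - a₂) - (x - a₁) := by rw [hdd]; ring
      calc |d| = |(x - a₂) - (x - a₁)| := by rw [← he]
        _ ≤ |x - a₂| + |x - a₁| := abs_sub _ _
        _ = |x - a₁| + |x - a₂| := by ring
    have hbA₁ : ∫ x in A₁, f x ≤ 2 ^ γ * K * D ^ (-α) := by
      have hpt : ∀ x ∈ A₁, f x ≤ (2 ^ γ * D ^ (-γ)) * jpn (x - a₁) ^ (-β) := by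
        intro x hx
        rw [hA₁, mem_Icc] at hx
        have hx1 : |x - a₁| ≤ R := abs_le.2 ⟨by linarith [hx.1], by linarith [hx.2]⟩
        have hx2 : R ≤ |x - a₂| := by
          have := habs x; rw [hR] at hx1 ⊢; linarith
        have hj : D / 2 ≤ jpn (x - a₂) :=
          hDR.trans (jpn_mono (by rw [abs_of_pos hRpos]; exact hx2))
        have hrp : jpn (x - a₂) ^ (-γ) ≤ (D / 2) ^ (-γ) := rpow_anti (by linarith) hj hγ
        have hrw : (D / 2) ^ (-γ) = 2 ^ γ * D ^ (-γ) := rpow_neg_div hDpos (by norm_num) γ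
        calc f x ≤ jpn (x - a₁) ^ (-β) * (D / 2) ^ (-γ) :=
              mul_le_mul_of_nonneg_left hrp (jpn_rpow_nonneg _ _)
          _ = (2 ^ γ * D ^ (-γ)) * jpn (x - a₁) ^ (-β) := by rw [hrw]; ring
      have hmono : ∫ x in A₁, f x ≤ ∫ x in A₁, (2 ^ γ * D ^ (-γ)) * jpn (x - a₁) ^ (-β) := by
        refine setIntegral_mono_on hfint.integrableOn ?_ hA₁m hpt
        exact (continuous_const.mul ((continuous_jpn_rpow (-β)).comp
          (continuous_id.sub continuous_const))).integrableOn_Icc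
      have hseq : {x : ℝ | x - a₁ ∈ Icc (-R) R} = A₁ := by
        ext x
        rw [hA₁]
        simp only [mem_setOf_eq, mem_Icc]
        constructor
        · intro ⟨h1, h2⟩; exact ⟨by linarith, by linarith⟩
        · intro ⟨h1, h2⟩; exact ⟨by linarith, by linarith⟩
      have hshift : ∫ x in A₁, jpn (x - a₁) ^ (-β) = ∫ y in Icc (-R) R, jpn y ^ (-β) := by
        rw [← setIntegral_shift (Icc (-R) R) measurableSet_Icc (fun y => jpn y ^ (-β)) a₁, hseq]
      have hW := hWβ d hd1
      rw [← hR] at hW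
      have hnn : (0:ℝ) ≤ 2 ^ γ * D ^ (-γ) :=
        mul_nonneg h2γ.le (Real.rpow_nonneg hDpos.le _)
      calc ∫ x in A₁, f x ≤ ∫ x in A₁, (2 ^ γ * D ^ (-γ)) * jpn (x - a₁) ^ (-β) := hmono
        _ = (2 ^ γ * D ^ (-γ)) * ∫ x in A₁, jpn (x - a₁) ^ (-β) := integral_const_mul _ _
        _ ≤ (2 ^ γ * D ^ (-γ)) * (K * D ^ (γ - α)) := by
            rw [hshift]; exact mul_le_mul_of_nonneg_left hW hnn
        _ = 2 ^ γ * K * (D ^ (-γ) * D ^ (γ - α)) := by ring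
        _ = 2 ^ γ * K * D ^ (-α) := by
            rw [← Real.rpow_add hDpos]; congr 2; ring
    have hbA₂ : ∫ x in A₂, f x ≤ 2 ^ β * K * D ^ (-α) := by
      have hpt : ∀ x ∈ A₂, f x ≤ (2 ^ β * D ^ (-β)) * jpn (x - a₂) ^ (-γ) := by
        intro x hx
        rw [hA₂, mem_Icc] at hx
        have hx1 : |x - a₂| ≤ R := abs_le.2 ⟨by linarith [hx.1], by linarith [hx.2]⟩
        have hx2 : R ≤ |x - a₁| := by
          have := habs x; rw [hR] at hx1 ⊢; linarith
        have hj : D / 2 ≤ jpn (x - a₁) :=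
          hDR.trans (jpn_mono (by rw [abs_of_pos hRpos]; exact hx2))
        have hrp : jpn (x - a₁) ^ (-β) ≤ (D / 2) ^ (-β) := rpow_anti (by linarith) hj hβ0
        have hrw : (D / 2) ^ (-β) = 2 ^ β * D ^ (-β) := rpow_neg_div hDpos (by norm_num) β
        calc f x ≤ (D / 2) ^ (-β) * jpn (x - a₂) ^ (-γ) :=
              mul_le_mul_of_nonneg_right hrp (jpn_rpow_nonneg _ _)
          _ = (2 ^ β * D ^ (-β)) * jpn (x - a₂) ^ (-γ) := by rw [hrw]
      have hmono : ∫ x in A₂, f x ≤ ∫ x in A₂, (2 ^ β * D ^ (-β)) * jpn (x - a₂) ^ (-γ) := by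
        refine setIntegral_mono_on hfint.integrableOn ?_ hA₂m hpt
        exact (continuous_const.mul ((continuous_jpn_rpow (-γ)).comp
          (continuous_id.sub continuous_const))).integrableOn_Icc
      have hseq : {x : ℝ | x - a₂ ∈ Icc (-R) R} = A₂ := by
        ext x
        rw [hA₂]
        simp only [mem_setOf_eq, mem_Icc]
        constructor
        · intro ⟨h1, h2⟩; exact ⟨by linarith, by linarith⟩
        · intro ⟨h1, h2⟩; exact ⟨by linarith, by linarith⟩
      have hshift : ∫ x in A₂, jpn (x - a₂) ^ (-γ) = ∫ y in Icc (-R) R, jpn y ^ (-γ) := by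
        rw [← setIntegral_shift (Icc (-R) R) measurableSet_Icc (fun y => jpn y ^ (-γ)) a₂, hseq]
      have hW := hWγ d hd1
      rw [← hR] at hW
      have hnn : (0:ℝ) ≤ 2 ^ β * D ^ (-β) :=
        mul_nonneg h2β.le (Real.rpow_nonneg hDpos.le _)
      calc ∫ x in A₂, f x ≤ ∫ x in A₂, (2 ^ β * D ^ (-β)) * jpn (x - a₂) ^ (-γ) := hmono
        _ = (2 ^ β * D ^ (-β)) * ∫ x in A₂, jpn (x - a₂) ^ (-γ) := integral_const_mul _ _
        _ ≤ (2 ^ β * D ^ (-β)) * (K * D ^ (β - α)) := by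
            rw [hshift]; exact mul_le_mul_of_nonneg_left hW hnn
        _ = 2 ^ β * K * (D ^ (-β) * D ^ (β - α)) := by ring
        _ = 2 ^ β * K * D ^ (-α) := by
            rw [← Real.rpow_add hDpos]; congr 2; ring
    have hbE : ∫ x in (A₁ ∪ A₂)ᶜ, f x ≤ CE * D ^ (-α) := by
      have hgint : Integrable fun x : ℝ => 3 ^ β * jpn (x - a₂) ^ (-(β + γ)) :=
        ((integrable_jpn_rpow hsum).comp_sub_right a₂).const_mul _
      have hEsub : (A₁ ∪ A₂)ᶜ ⊆ {x : ℝ | R ≤ |x - a₂|} := by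
        intro x hx
        rw [mem_compl_iff, mem_union] at hx
        push_neg at hx
        have h2 := hx.2
        rw [hA₂, mem_Icc] at h2
        show R ≤ |x - a₂|
        by_contra hcon
        push_neg at hcon
        rcases abs_lt.1 hcon with ⟨hl, hr⟩
        exact h2 ⟨by linarith, by linarith⟩
      have hpt : ∀ x ∈ (A₁ ∪ A₂)ᶜ, f x ≤ 3 ^ β * jpn (x - a₂) ^ (-(β + γ)) := by
        intro x hx
        rw [mem_compl_iff, mem_union] at hx
        push_neg at hx
        have h1 := hx.1
        rw [hA₁, mem_Icc] at h1
        have hx1 : R ≤ |x - a₁| := by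
          by_contra hcon
          push_neg at hcon
          rcases abs_lt.1 hcon with ⟨hl, hr⟩
          exact h1 ⟨by linarith, by linarith⟩
        have htri : |x - a₂| ≤ 3 * |x - a₁| := by
          have he : x - a₂ = (x - a₁) + d := by rw [hdd]; ring
          calc |x - a₂| = |(x - a₁) + d| := by rw [← he]
            _ ≤ |x - a₁| + |d| := abs_add_le _ _
            _ ≤ 3 * |x - a₁| := by rw [hR] at hx1; linarith
        have hj : jpn (x - a₂) / 3 ≤ jpn (x - a₁) := by
          have := jpn_triple htri; linarith
        have hrp : jpn (x - a₁) ^ (-β) ≤ (jpn (x - a₂) / 3) ^ (-β) :=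
          rpow_anti (div_pos (jpn_pos _) (by norm_num)) hj hβ0
        have hrw : (jpn (x - a₂) / 3) ^ (-β) = 3 ^ β * jpn (x - a₂) ^ (-β) :=
          rpow_neg_div (jpn_pos _) (by norm_num) β
        calc f x ≤ (jpn (x - a₂) / 3) ^ (-β) * jpn (x - a₂) ^ (-γ) :=
              mul_le_mul_of_nonneg_right hrp (jpn_rpow_nonneg _ _)
          _ = 3 ^ β * (jpn (x - a₂) ^ (-β) * jpn (x - a₂) ^ (-γ)) := by rw [hrw]; ring
          _ = 3 ^ β * jpn (x - a₂) ^ (-(β + γ)) := by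
              rw [← Real.rpow_add (jpn_pos _)]; congr 2; ring
      have step1 : ∫ x in (A₁ ∪ A₂)ᶜ, f x
          ≤ ∫ x in (A₁ ∪ A₂)ᶜ, 3 ^ β * jpn (x - a₂) ^ (-(β + γ)) :=
        setIntegral_mono_on hfint.integrableOn hgint.integrableOn hUm.compl hpt
      have step2 : ∫ x in (A₁ ∪ A₂)ᶜ, 3 ^ β * jpn (x - a₂) ^ (-(β + γ))
          ≤ ∫ x in {x : ℝ | R ≤ |x - a₂|}, 3 ^ β * jpn (x - a₂) ^ (-(β + γ)) := by
        refine setIntegral_mono_set hgint.integrableOn ?_ (HasSubset.Subset.eventuallyLE hEsub)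
        exact Filter.Eventually.of_forall fun x => mul_nonneg h3β.le (jpn_rpow_nonneg _ _)
      have step3 : ∫ x in {x : ℝ | R ≤ |x - a₂|}, 3 ^ β * jpn (x - a₂) ^ (-(β + γ))
          = 3 ^ β * ∫ y in {y : ℝ | R ≤ |y|}, jpn y ^ (-(β + γ)) := by
        rw [integral_const_mul]
        congr 1
        rw [← setIntegral_shift {y : ℝ | R ≤ |y|}
          ((isClosed_le continuous_const continuous_abs).measurableSet)
          (fun y => jpn y ^ (-(β + γ))) a₂]
        rfl
      have step4 : ∫ y in {y : ℝ | R ≤ |y|}, jpn y ^ (-(β + γ))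
          ≤ 2 / (β + γ - 1) * R ^ (1 - (β + γ)) := tail_raw hρ1 hRpos
      have hRD : D / (2 * Real.sqrt 2) ≤ R := by
        have h1 : D ≤ Real.sqrt 2 * |d| := by
          have h2 : jpn d ≤ Real.sqrt (2 * d ^ 2) := by
            refine Real.sqrt_le_sqrt ?_
            have : 1 ≤ d ^ 2 := by nlinarith [hd, abs_nonneg d, sq_abs d]
            linarith
          rw [Real.sqrt_mul (by norm_num) (d ^ 2), Real.sqrt_sq_eq_abs] at h2
          rw [hD]; exact h2
        rw [hR, div_le_div_iff₀ (by positivity) (by norm_num)]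
        nlinarith [hsqrt2]
      have hRpow : R ^ (1 - (β + γ)) ≤ (2 * Real.sqrt 2) ^ (β + γ - 1) * D ^ (-α) := by
        have h1 : R ^ (-(β + γ - 1)) ≤ (D / (2 * Real.sqrt 2)) ^ (-(β + γ - 1)) :=
          rpow_anti (div_pos hDpos (by positivity)) hRD (by linarith)
        have h2 : (D / (2 * Real.sqrt 2)) ^ (-(β + γ - 1))
            = (2 * Real.sqrt 2) ^ (β + γ - 1) * D ^ (-(β + γ - 1)) :=
          rpow_neg_div hDpos (by positivity) _
        have h3 : D ^ (-(β + γ - 1)) ≤ D ^ (-α) :=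
          Real.rpow_le_rpow_of_exponent_le hD1 (by linarith)
        have h4 : (0:ℝ) ≤ (2 * Real.sqrt 2) ^ (β + γ - 1) :=
          Real.rpow_nonneg (by positivity) _
        calc R ^ (1 - (β + γ)) = R ^ (-(β + γ - 1)) := by congr 1; ring
          _ ≤ (2 * Real.sqrt 2) ^ (β + γ - 1) * D ^ (-(β + γ - 1)) := by rw [← h2]; exact h1
          _ ≤ (2 * Real.sqrt 2) ^ (β + γ - 1) * D ^ (-α) := mul_le_mul_of_nonneg_left h3 h4
      have hdivnn : (0:ℝ) ≤ 2 / (β + γ - 1) := div_nonneg (by norm_num) (by linarith)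
      calc ∫ x in (A₁ ∪ A₂)ᶜ, f x
          ≤ 3 ^ β * ∫ y in {y : ℝ | R ≤ |y|}, jpn y ^ (-(β + γ)) := by
            rw [← step3]; exact step1.trans step2
        _ ≤ 3 ^ β * (2 / (β + γ - 1) * R ^ (1 - (β + γ))) :=
            mul_le_mul_of_nonneg_left step4 h3β.le
        _ ≤ 3 ^ β * (2 / (β + γ - 1) * ((2 * Real.sqrt 2) ^ (β + γ - 1) * D ^ (-α))) :=
            mul_le_mul_of_nonneg_left (mul_le_mul_of_nonneg_left hRpow hdivnn) h3β.le
        _ = CE * D ^ (-α) := by rw [hCE]; ring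
    have hsplit : (∫ x : ℝ, f x) = (∫ x in A₁ ∪ A₂, f x) + ∫ x in (A₁ ∪ A₂)ᶜ, f x :=
      (integral_add_compl hUm hfint).symm
    have hunion : ∫ x in A₁ ∪ A₂, f x ≤ (∫ x in A₁, f x) + ∫ x in A₂, f x := by
      have hdis : Disjoint A₁ (A₂ \ A₁) := disjoint_sdiff_right
      have he : A₁ ∪ A₂ \ A₁ = A₁ ∪ A₂ := Set.union_diff_self
      rw [← he, setIntegral_union hdis (hA₂m.diff hA₁m) hfint.integrableOn hfint.integrableOn]
      have h5 : ∫ x in A₂ \ A₁, f x ≤ ∫ x in A₂, f x :=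
        setIntegral_mono_set hfint.integrableOn
          (Filter.Eventually.of_forall fun x => hfnn x)
          (HasSubset.Subset.eventuallyLE diff_subset)
      linarith
    have hfinal : (Csm + 2 ^ γ * K + 2 ^ β * K + CE) * D ^ (-α)
        = Csm * D ^ (-α) + (2 ^ γ * K * D ^ (-α) + 2 ^ β * K * D ^ (-α) + CE * D ^ (-α)) := by
      ring
    calc (∫ x : ℝ, f x) = (∫ x in A₁ ∪ A₂, f x) + ∫ x in (A₁ ∪ A₂)ᶜ, f x := hsplit
      _ ≤ 2 ^ γ * K * D ^ (-α) + 2 ^ β * K * D ^ (-α) + CE * D ^ (-α) := by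
          linarith
      _ ≤ (Csm + 2 ^ γ * K + 2 ^ β * K + CE) * D ^ (-α) := by
          rw [hfinal]
          have : 0 ≤ Csm * D ^ (-α) := mul_nonneg hCsm0.le hDα.le
          linarith

/-- Convolution-type estimate for Japanese bracket weights (integral form). -/
theorem convolution_bracket_integral (β γ ε : ℝ) (hγ : 0 ≤ γ) (hβγ : γ ≤ β)
    (hsum : 1 < β + γ) (hε : 0 < ε) :
    ∃ C : ℝ, 0 < C ∧ ∀ a₁ a₂ : ℝ,
      (∫ x : ℝ, jpn (x - a₁) ^ (-β) * jpn (x - a₂) ^ (-γ))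
        ≤ C * jpn (a₁ - a₂) ^
            (-(if 1 < β then γ else if β = 1 then γ - ε else β + γ - 1)) := by
  have hβ0 : 0 ≤ β := hγ.trans hβγ
  rcases lt_trichotomy β 1 with hb | hb | hb
  · -- β < 1
    rw [if_neg (not_lt.2 hb.le), if_neg hb.ne]
    have hγ1 : γ < 1 := lt_of_le_of_lt hβγ hb
    set K : ℝ := (2 * 2 ^ β / (1 - β) * (3 / 2) ^ (1 - β))
      + (2 * 2 ^ γ / (1 - γ) * (3 / 2) ^ (1 - γ)) + 1 with hKdef
    have hKβ : (0:ℝ) < 2 * 2 ^ β / (1 - β) * (3 / 2) ^ (1 - β) :=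
      mul_pos (div_pos (by positivity) (by linarith)) (Real.rpow_pos_of_pos (by norm_num) _)
    have hKγ : (0:ℝ) < 2 * 2 ^ γ / (1 - γ) * (3 / 2) ^ (1 - γ) :=
      mul_pos (div_pos (by positivity) (by linarith)) (Real.rpow_pos_of_pos (by norm_num) _)
    refine main_core β γ (β + γ - 1) hγ hβγ hsum le_rfl K (by rw [hKdef]; linarith) ?_ ?_
    · intro d hd
      rw [show γ - (β + γ - 1) = 1 - β by ring]
      refine (W_ftc hβ0 hb d hd).trans ?_
      exact mul_le_mul_of_nonneg_right (by rw [hKdef]; linarith) (jpn_rpow_nonneg d _)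
    · intro d hd
      rw [show β - (β + γ - 1) = 1 - γ by ring]
      refine (W_ftc hγ hγ1 d hd).trans ?_
      exact mul_le_mul_of_nonneg_right (by rw [hKdef]; linarith) (jpn_rpow_nonneg d _)
  · -- β = 1
    subst hb
    rw [if_neg (lt_irrefl 1), if_pos rfl]
    set ε₀ : ℝ := min ε 1 with hε₀def
    have hε₀ : 0 < ε₀ := lt_min hε one_pos
    have hε₀ε : ε₀ ≤ ε := min_le_left _ _
    set K : ℝ := (∫ y : ℝ, jpn y ^ (-(1 + ε₀))) + (∫ y : ℝ, jpn y ^ (-(γ + (1 - γ + ε₀)))) + 1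
      with hKdef
    have hI1 : 0 ≤ ∫ y : ℝ, jpn y ^ (-(1 + ε₀)) := integral_nonneg fun y => jpn_rpow_nonneg y _
    have hI2 : 0 ≤ ∫ y : ℝ, jpn y ^ (-(γ + (1 - γ + ε₀))) :=
      integral_nonneg fun y => jpn_rpow_nonneg y _
    refine main_core 1 γ (γ - ε) hγ hβγ hsum (by linarith) K (by rw [hKdef]; linarith) ?_ ?_
    · intro d hd
      refine (W_pull (by norm_num) hε₀.le (by linarith [hε₀ε] : ε₀ ≤ γ - (γ - ε))
        (by linarith : (1:ℝ) < 1 + ε₀) d hd).trans ?_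
      exact mul_le_mul_of_nonneg_right (by rw [hKdef]; linarith) (jpn_rpow_nonneg d _)
    · intro d hd
      refine (W_pull hγ (by linarith [hβγ] : 0 ≤ 1 - γ + ε₀)
        (by linarith : 1 - γ + ε₀ ≤ 1 - (γ - ε))
        (by linarith : (1:ℝ) < γ + (1 - γ + ε₀)) d hd).trans ?_
      exact mul_le_mul_of_nonneg_right (by rw [hKdef]; linarith) (jpn_rpow_nonneg d _)
  · -- β > 1
    rw [if_pos hb]
    set s' : ℝ := max 0 ((1 + β - 2 * γ) / 2) with hs'def
    have hs'0 : 0 ≤ s' := le_max_left _ _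
    have hs'le : s' ≤ β - γ := max_le (by linarith) (by linarith)
    have hs'1 : 1 < γ + s' := by
      have := le_max_right 0 ((1 + β - 2 * γ) / 2)
      rw [← hs'def] at this
      linarith
    set K : ℝ := (∫ y : ℝ, jpn y ^ (-(β + 0))) + (∫ y : ℝ, jpn y ^ (-(γ + s'))) + 1 with hKdef
    have hI1 : 0 ≤ ∫ y : ℝ, jpn y ^ (-(β + 0)) := integral_nonneg fun y => jpn_rpow_nonneg y _
    have hI2 : 0 ≤ ∫ y : ℝ, jpn y ^ (-(γ + s')) := integral_nonneg fun y => jpn_rpow_nonneg y _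
    refine main_core β γ γ hγ hβγ hsum (by linarith) K (by rw [hKdef]; linarith) ?_ ?_
    · intro d hd
      refine (W_pull hβ0 le_rfl (by linarith : (0:ℝ) ≤ γ - γ)
        (by linarith : (1:ℝ) < β + 0) d hd).trans ?_
      exact mul_le_mul_of_nonneg_right (by rw [hKdef]; linarith) (jpn_rpow_nonneg d _)
    · intro d hd
      refine (W_pull hγ hs'0 (by linarith : s' ≤ β - γ) hs'1 d hd).trans ?_
      exact mul_le_mul_of_nonneg_right (by rw [hKdef]; linarith) (jpn_rpow_nonneg d _)
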